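/- arXiv:1608.01035 — 3 statements merged into one kernel-verified Lean document; each statement's English description precedes it below -/
import Mathlib

section
/- Let X be a Banach space and L : X → X a bounded linear operator such that λ I + L is invertible for some scalar λ ≠ 0. Let P : X → X be a bounded linear projection. If ‖(I − P)L‖ · ‖(λ I + L)⁻¹‖ ≤ δ/(1+δ) for some δ > 0, then λ I + P L is invertible and ‖(λ I + P L)⁻¹‖ ≤ (1 + δ) ‖(λ I + L)⁻¹‖. -/
open ContinuousLinearMap

/-- Key invertibility step of Lemma 4.2: if `‖(I-P)L‖·‖(λI+L)⁻¹‖ ≤ δ/(1+δ)` then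
`λI + PL` is invertible with `‖(λI+PL)⁻¹‖ ≤ (1+δ)‖(λI+L)⁻¹‖`. -/
theorem projection_perturbation_invertible
    {X : Type*} [NormedAddCommGroup X] [NormedSpace ℂ X] [CompleteSpace X]
    (L P B : X →L[ℂ] X) (l : ℂ) (δ : ℝ)
    (hl : l ≠ 0) (hδ : 0 < δ)
    (hP : P ∘L P = P)
    (hB1 : (l • (1 : X →L[ℂ] X) + L) ∘L B = 1)
    (hB2 : B ∘L (l • (1 : X →L[ℂ] X) + L) = 1)
    (hsmall : ‖((1 : X →L[ℂ] X) - P) ∘L L‖ * ‖B‖ ≤ δ / (1 + δ)) :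
    ∃ C : X →L[ℂ] X,
      (l • (1 : X →L[ℂ] X) + P ∘L L) ∘L C = 1 ∧
      C ∘L (l • (1 : X →L[ℂ] X) + P ∘L L) = 1 ∧
      ‖C‖ ≤ (1 + δ) * ‖B‖ := by
  set A : X →L[ℂ] X := l • (1 : X →L[ℂ] X) + L with hA
  set E : X →L[ℂ] X := ((1 : X →L[ℂ] X) - P) ∘L L with hE
  set t : X →L[ℂ] X := B ∘L E with hT
  have hδ1 : (0:ℝ) < 1 + δ := by linarith
  have hdlt : δ / (1 + δ) < 1 := by
    rw [div_lt_one hδ1]; linarith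
  have hnt : ‖t‖ ≤ δ / (1 + δ) := by
    calc ‖t‖ ≤ ‖B‖ * ‖E‖ := opNorm_comp_le _ _
    _ = ‖E‖ * ‖B‖ := mul_comm _ _
    _ ≤ δ / (1 + δ) := hsmall
  have ht1 : ‖t‖ < 1 := lt_of_le_of_lt hnt hdlt
  -- the unit 1 - t
  let u : (X →L[ℂ] X)ˣ := Units.oneSub t ht1
  have huval : (u : X →L[ℂ] X) = 1 - t := rfl
  -- key identity: A * (1 - t) = l•1 + P∘L
  have hkey : A * ((u : X →L[ℂ] X)) = l • (1 : X →L[ℂ] X) + P ∘L L := by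
    rw [huval, mul_sub, mul_one]
    have : A * t = E := by
      show A * (B * E) = E
      rw [← mul_assoc]
      have : A * B = 1 := hB1
      rw [this, one_mul]
    rw [this, hA, hE]
    ext x
    simp [ContinuousLinearMap.sub_apply, ContinuousLinearMap.add_apply]
    abel
  refine ⟨(↑u⁻¹ : X →L[ℂ] X) ∘L B, ?_, ?_, ?_⟩
  · show (l • (1 : X →L[ℂ] X) + P ∘L L) * ((↑u⁻¹ : X →L[ℂ] X) * B) = 1
    rw [← hkey, mul_assoc, ← mul_assoc (u : X →L[ℂ] X), u.mul_inv, one_mul]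
    exact hB1
  · show ((↑u⁻¹ : X →L[ℂ] X) * B) * (l • (1 : X →L[ℂ] X) + P ∘L L) = 1
    rw [← hkey, ← mul_assoc, mul_assoc _ B A]
    have : B * A = 1 := hB2
    rw [this, mul_one, u.inv_mul]
  · have hinv : ‖(↑u⁻¹ : X →L[ℂ] X)‖ ≤ (1 - ‖t‖)⁻¹ := by
      have h1 : (↑u⁻¹ : X →L[ℂ] X) = ∑' n : ℕ, t ^ n := rfl
      rw [h1]
      refine le_trans (tsum_geometric_le_of_norm_lt_one t ht1) ?_
      have : ‖(1 : X →L[ℂ] X)‖ ≤ 1 := norm_id_le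
      linarith
    have h2 : (1 - ‖t‖)⁻¹ ≤ 1 + δ := by
      rw [inv_le_comm₀ (by linarith [lt_of_le_of_lt hnt hdlt] : (0:ℝ) < 1 - ‖t‖) hδ1]
      have : (1:ℝ) - δ / (1 + δ) = (1 + δ)⁻¹ := by
        field_simp
        ring
      linarith [hnt, this ▸ sub_le_sub_left hnt 1]
    calc ‖(↑u⁻¹ : X →L[ℂ] X) ∘L B‖ ≤ ‖(↑u⁻¹ : X →L[ℂ] X)‖ * ‖B‖ := opNorm_comp_le _ _
    _ ≤ (1 + δ) * ‖B‖ := by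
        exact mul_le_mul_of_nonneg_right (le_trans hinv h2) (norm_nonneg _)
end

section
/- Let X be a Banach space, λ ≠ 0, and L : X → X bounded with λ I + L invertible. Let P be a bounded projection and suppose ‖(I − P)L‖ · ‖(λ I + L)⁻¹‖ ≤ δ/(1+δ) for some δ > 0. If v solves (λ I + L)v = f and v_P solves (λ I + P L)v_P = P f, then ‖v − v_P‖ ≤ |λ| (1 + δ) ‖(λ I + L)⁻¹‖ · ‖(I − P)v‖. -/
open ContinuousLinearMap

/-- Lemma 4.2 (quasi-optimality of the Galerkin/projection method):
if `‖(I-P)L‖·‖(λI+L)⁻¹‖ ≤ δ/(1+δ)`, `(λI+L)v = f` and `(λI+PL)v_P = Pf`, then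
`‖v - v_P‖ ≤ |λ|(1+δ)‖(λI+L)⁻¹‖·‖(I-P)v‖`. -/
theorem galerkin_quasioptimal
    {X : Type*} [NormedAddCommGroup X] [NormedSpace ℂ X] [CompleteSpace X]
    (L P B : X →L[ℂ] X) (l : ℂ) (δ : ℝ)
    (hl : l ≠ 0) (hδ : 0 < δ)
    (hP : P ∘L P = P)
    (hB1 : (l • (1 : X →L[ℂ] X) + L) ∘L B = 1)
    (hB2 : B ∘L (l • (1 : X →L[ℂ] X) + L) = 1)
    (hsmall : ‖((1 : X →L[ℂ] X) - P) ∘L L‖ * ‖B‖ ≤ δ / (1 + δ))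
    (f v vP : X)
    (hv : (l • (1 : X →L[ℂ] X) + L) v = f)
    (hvP : (l • (1 : X →L[ℂ] X) + P ∘L L) vP = P f) :
    ‖v - vP‖ ≤ ‖l‖ * (1 + δ) * ‖B‖ * ‖((1 : X →L[ℂ] X) - P) v‖ := by
  set A : X →L[ℂ] X := l • (1 : X →L[ℂ] X) + L with hA
  set AP : X →L[ℂ] X := l • (1 : X →L[ℂ] X) + P ∘L L with hAP
  set t : X →L[ℂ] X := (((1 : X →L[ℂ] X) - P) ∘L L) ∘L B with htdef
  have hδ1 : (0:ℝ) < 1 + δ := by linarith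
  have hfrac : δ / (1 + δ) < 1 := by
    rw [div_lt_one hδ1]; linarith
  have htle : ‖t‖ ≤ δ / (1 + δ) :=
    le_trans (opNorm_comp_le _ _) hsmall
  have ht : ‖t‖ < 1 := lt_of_le_of_lt htle hfrac
  -- the geometric series
  set S : X →L[ℂ] X := ∑' n : ℕ, t ^ n with hS
  have hSmul : S * (1 - t) = 1 := geom_series_mul_neg t ht
  -- (1 - t) * A = AP
  have htA : t * A = L - P ∘L L := by
    have : t * A = (((1 : X →L[ℂ] X) - P) ∘L L) ∘L (B ∘L A) := by
      simp [mul_def, htdef, comp_assoc]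
    rw [this, hB2]
    ext x; simp
  have hfac : (1 - t) * A = AP := by
    rw [sub_mul, one_mul, htA, hA, hAP]
    abel
  -- left inverse of AP
  have hC : (B * S) * AP = 1 := by
    rw [← hfac, ← mul_assoc, mul_assoc B S (1 - t), hSmul, mul_one, mul_def]
    exact hB2
  -- AP (v - vP) = l • ((1-P) v)
  have hkey : AP (v - vP) = l • (((1 : X →L[ℂ] X) - P) v) := by
    have h1 : AP v - AP vP = AP v - P (A v) := by rw [hv, hvP]
    rw [map_sub, h1, hAP, hA]
    simp only [add_apply, smul_apply, one_apply, comp_apply, sub_apply, map_add, map_smul,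
      smul_sub]
    abel
  have hvv : v - vP = (B * S) (l • (((1 : X →L[ℂ] X) - P) v)) := by
    have := congrArg (B * S) hkey
    rwa [← comp_apply, ← mul_def, hC, ContinuousLinearMap.one_apply] at this
  -- norm of S
  have hSnorm : ‖S‖ ≤ 1 + δ := by
    have h1 : ‖S‖ ≤ ‖(1 : X →L[ℂ] X)‖ - 1 + (1 - ‖t‖)⁻¹ :=
      tsum_geometric_le_of_norm_lt_one t ht
    have h2 : ‖(1 : X →L[ℂ] X)‖ ≤ 1 := norm_id_le
    have h3 : (1 - ‖t‖)⁻¹ ≤ 1 + δ := by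
      have hlb : (1 + δ)⁻¹ ≤ 1 - ‖t‖ := by
        have : 1 - δ / (1 + δ) = (1 + δ)⁻¹ := by
          field_simp
          ring
        linarith [this ▸ (by linarith [htle] : 1 - δ / (1 + δ) ≤ 1 - ‖t‖)]
      calc (1 - ‖t‖)⁻¹ ≤ ((1 + δ)⁻¹)⁻¹ :=
            inv_anti₀ (by positivity) hlb
        _ = 1 + δ := inv_inv _
    linarith
  calc ‖v - vP‖ = ‖(B * S) (l • (((1 : X →L[ℂ] X) - P) v))‖ := by rw [hvv]
    _ ≤ ‖B * S‖ * ‖l • (((1 : X →L[ℂ] X) - P) v)‖ := le_opNorm _ _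
    _ = ‖B * S‖ * (‖l‖ * ‖((1 : X →L[ℂ] X) - P) v‖) := by
        rw [norm_smul]
    _ ≤ ‖B‖ * (1 + δ) * (‖l‖ * ‖((1 : X →L[ℂ] X) - P) v‖) := by
        have hBSle : ‖B * S‖ ≤ ‖B‖ * (1 + δ) :=
          le_trans (norm_mul_le _ _)
            (mul_le_mul_of_nonneg_left hSnorm (norm_nonneg B))
        exact mul_le_mul_of_nonneg_right hBSle (by positivity)
    _ = ‖l‖ * (1 + δ) * ‖B‖ * ‖((1 : X →L[ℂ] X) - P) v‖ := by ring
end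

section
/- There exist constants C₂ > 0 and δ₁ > 0 such that for all 0 < δ ≤ δ₁ and all natural numbers m, setting β = π/2 − δ and γ_β = 2 sin(β/(4 − 2β/π)), one has γ_β^m ≤ exp(−m δ / C₂). Consequently, given ε ∈ (0,1), if m ≥ (C₂/δ) log(1/ε) then γ_β^m ≤ ε. -/
open Real

private lemma key_factor_bound (δ : ℝ) (h0 : 0 < δ) (h1 : δ ≤ 1) :
    2 * Real.sin ((π / 2 - δ) / (4 - 2 * (π / 2 - δ) / π)) ≤ Real.exp (-δ / 3) := by
  have hπ3 : (3 : ℝ) < π := Real.pi_gt_three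
  have hπ : (0 : ℝ) < π := by linarith
  set x := (π / 2 - δ) / (4 - 2 * (π / 2 - δ) / π) with hx
  have hden : 4 - 2 * (π / 2 - δ) / π = 3 + 2 * δ / π := by
    field_simp; ring
  have hdenpos : (0 : ℝ) < 3 + 2 * δ / π := by positivity
  have hnum : 0 < π / 2 - δ := by nlinarith
  have hxpos : 0 < x := by
    rw [hx, hden]; positivity
  have hxle : x ≤ π / 6 - δ / 3 := by
    rw [hx, hden, div_le_iff₀ hdenpos]
    have h2 : 2 * δ / π ≤ 1 := by
      rw [div_le_one hπ]; nlinarith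
    nlinarith [mul_pos h0 (div_pos (by linarith : (0:ℝ) < 2 * δ) hπ)]
  have hy1 : π / 6 - δ / 3 ≤ π / 2 := by nlinarith
  have hy2 : -(π / 2) ≤ π / 6 - δ / 3 := by nlinarith
  have hsin : Real.sin x ≤ Real.sin (π / 6 - δ / 3) := by
    apply Real.strictMonoOn_sin.monotoneOn
    · constructor <;> [linarith; linarith]
    · constructor <;> [exact hy2; exact hy1]
    · exact hxle
  have hs : Real.sin (π / 6 - δ / 3)
      = Real.cos (δ / 3) / 2 - Real.sqrt 3 / 2 * Real.sin (δ / 3) := by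
    rw [Real.sin_sub, Real.sin_pi_div_six, Real.cos_pi_div_six]; ring
  have hcos : Real.cos (δ / 3) ≤ 1 := Real.cos_le_one _
  have hcube : δ / 3 - (δ / 3) ^ 3 / 4 < Real.sin (δ / 3) :=
    by
      have h := Real.sin_gt_sub_cube (x := δ / 3) (by linarith)
      have : 0 < (δ / 3) ^ 3 := by positivity
      linarith
  have hsqrt3 : (1.7 : ℝ) ≤ Real.sqrt 3 := by
    nlinarith [Real.sqrt_nonneg 3, Real.sq_sqrt (by norm_num : (0:ℝ) ≤ 3)]
  have hsq : (δ / 3) ^ 2 ≤ 1 / 9 := by nlinarith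
  have hsnn : 0 < Real.sin (δ / 3) := by nlinarith [mul_pos h0 h0, mul_pos (mul_pos h0 h0) h0]
  have hbound : 2 * Real.sin (π / 6 - δ / 3) ≤ 1 - δ / 3 := by
    rw [hs]
    have h17 : (1.7 : ℝ) * Real.sin (δ / 3) ≤ Real.sqrt 3 * Real.sin (δ / 3) :=
      mul_le_mul_of_nonneg_right hsqrt3 hsnn.le
    have h17' : δ / 3 ≤ (1.7 : ℝ) * Real.sin (δ / 3) := by
      nlinarith [mul_pos h0 h0, mul_pos (mul_pos h0 h0) h0]
    linarith
  have hexp : 1 - δ / 3 ≤ Real.exp (-δ / 3) := by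
    have := Real.add_one_le_exp (-δ / 3)
    linarith
  linarith
/-- Quantitative GMRES iteration bound: there are `C₂, δ₁ > 0` such that for
`0 < δ ≤ δ₁` and `β = π/2 - δ`, the factor `γ_β = 2 sin(β/(4 - 2β/π))`
satisfies `γ_β^m ≤ exp(-mδ/C₂)`; consequently `m ≥ (C₂/δ) log(1/ε)` forces
`γ_β^m ≤ ε` for any `ε ∈ (0,1)`. -/
theorem gamma_beta_iteration_bound :
    ∃ C₂ > (0 : ℝ), ∃ δ₁ > (0 : ℝ), ∀ δ : ℝ, 0 < δ → δ ≤ δ₁ →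
      (∀ m : ℕ,
        (2 * Real.sin ((π / 2 - δ) / (4 - 2 * (π / 2 - δ) / π))) ^ m
          ≤ Real.exp (-(m : ℝ) * δ / C₂)) ∧
      (∀ ε : ℝ, 0 < ε → ε < 1 → ∀ m : ℕ,
        (C₂ / δ) * Real.log (1 / ε) ≤ (m : ℝ) →
        (2 * Real.sin ((π / 2 - δ) / (4 - 2 * (π / 2 - δ) / π))) ^ m ≤ ε) := by
  refine ⟨3, by norm_num, 1, by norm_num, fun δ h0 h1 => ?_⟩
  have hπ3 : (3 : ℝ) < π := Real.pi_gt_three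
  have hπ : (0 : ℝ) < π := by linarith
  have hγ : 2 * Real.sin ((π / 2 - δ) / (4 - 2 * (π / 2 - δ) / π)) ≤ Real.exp (-δ / 3) :=
    key_factor_bound δ h0 h1
  have hγnn : 0 ≤ 2 * Real.sin ((π / 2 - δ) / (4 - 2 * (π / 2 - δ) / π)) := by
    have hden : 4 - 2 * (π / 2 - δ) / π = 3 + 2 * δ / π := by field_simp; ring
    have hxpos : 0 < (π / 2 - δ) / (4 - 2 * (π / 2 - δ) / π) := by
      rw [hden]
      apply div_pos (by nlinarith) (by positivity)
    have hxlt : (π / 2 - δ) / (4 - 2 * (π / 2 - δ) / π) < π := by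
      rw [hden, div_lt_iff₀ (by positivity)]
      nlinarith [mul_pos hπ (div_pos (by linarith : (0:ℝ) < 2 * δ) hπ)]
    have := Real.sin_nonneg_of_nonneg_of_le_pi hxpos.le hxlt.le
    linarith
  have hpow : ∀ m : ℕ,
      (2 * Real.sin ((π / 2 - δ) / (4 - 2 * (π / 2 - δ) / π))) ^ m
        ≤ Real.exp (-(m : ℝ) * δ / 3) := by
    intro m
    calc (2 * Real.sin ((π / 2 - δ) / (4 - 2 * (π / 2 - δ) / π))) ^ m
        ≤ (Real.exp (-δ / 3)) ^ m := pow_le_pow_left₀ hγnn hγ m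
      _ = Real.exp (-(m : ℝ) * δ / 3) := by
          rw [← Real.exp_nat_mul]; ring_nf
  refine ⟨hpow, fun ε hε0 hε1 m hm => ?_⟩
  calc (2 * Real.sin ((π / 2 - δ) / (4 - 2 * (π / 2 - δ) / π))) ^ m
      ≤ Real.exp (-(m : ℝ) * δ / 3) := hpow m
    _ ≤ ε := by
        rw [← Real.exp_log hε0]
        apply Real.exp_le_exp.2
        have hlog : Real.log (1 / ε) = -Real.log ε := by
          rw [one_div, Real.log_inv]
        rw [hlog] at hm
        have h3 : (0:ℝ) ≤ δ / 3 := by linarith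
        have := mul_le_mul_of_nonneg_right hm h3
        have hδ3 : 3 / δ * -Real.log ε * (δ / 3) = -Real.log ε := by
          field_simp
        rw [hδ3] at this
        nlinarith [this]
end
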